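/- For every real number c > 0 and every x ∈ [0, 1/2], one has c^{1−2x} / (x^{2x}·(1−2x)^{1−2x}) ≤ c + 2, where real powers are used with the convention 0⁰ = 1; moreover equality holds if and only if x = 1/(c+2). -/

import Mathlib

open Real

lemma interior_eq (c x : ℝ) (hc : 0 < c) (h0 : 0 < x) (h1 : x < 1/2) :
    c ^ (1 - 2*x) / (x ^ (2*x) * (1 - 2*x) ^ (1 - 2*x)) =
    Real.exp ((1 - 2*x) * Real.log (c/(1 - 2*x)) + (2*x) * Real.log (1/x)) := by
  have ht : 0 < 1 - 2*x := by linarith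
  rw [Real.rpow_def_of_pos hc, Real.rpow_def_of_pos h0, Real.rpow_def_of_pos ht,
      ← Real.exp_add, ← Real.exp_sub, Real.log_div hc.ne' ht.ne',
      Real.log_div one_ne_zero h0.ne', Real.log_one]
  congr 1
  ring

-- strict inequality in the interior when x ≠ 1/(c+2)
lemma interior_lt (c x : ℝ) (hc : 0 < c) (h0 : 0 < x) (h1 : x < 1/2)
    (hne : x ≠ 1/(c+2)) :
    c ^ (1 - 2*x) / (x ^ (2*x) * (1 - 2*x) ^ (1 - 2*x)) < c + 2 := by
  have ht : 0 < 1 - 2*x := by linarith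
  have hp : c/(1 - 2*x) ∈ Set.Ioi (0:ℝ) := div_pos hc ht
  have hq : (1/x : ℝ) ∈ Set.Ioi (0:ℝ) := by
    simp only [Set.mem_Ioi]
    positivity
  have hpq : c/(1 - 2*x) ≠ 1/x := by
    intro h
    apply hne
    have h2 : c * x = 1 - 2*x := by
      field_simp at h
      linarith [h]
    have hc2 : c + 2 > 0 := by linarith
    field_simp
    linarith
  have h2x : (0:ℝ) < 2*x := by linarith
  have key := strictConcaveOn_log_Ioi.2 hp hq hpq ht h2x (by ring)
  simp only [smul_eq_mul] at key
  have havg : (1 - 2*x) * (c/(1 - 2*x)) + (2*x) * (1/x) = c + 2 := by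
    field_simp
  rw [havg] at key
  rw [interior_eq c x hc h0 h1]
  calc Real.exp ((1 - 2*x) * Real.log (c/(1 - 2*x)) + (2*x) * Real.log (1/x))
      < Real.exp (Real.log (c + 2)) := Real.exp_lt_exp.2 key
    _ = c + 2 := Real.exp_log (by linarith)

lemma at_opt (c : ℝ) (hc : 0 < c) :
    c ^ (1 - 2*(1/(c+2))) / ((1/(c+2)) ^ (2*(1/(c+2))) * (1 - 2*(1/(c+2))) ^ (1 - 2*(1/(c+2)))) = c + 2 := by
  have hc2 : (0:ℝ) < c + 2 := by linarith
  set x : ℝ := 1/(c+2) with hxdef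
  have h0 : 0 < x := by positivity
  have h1 : x < 1/2 := by
    rw [hxdef, div_lt_div_iff₀ hc2 (by norm_num)]
    linarith
  have hx : 1/x = c + 2 := by rw [hxdef]; field_simp
  have hx2 : c/(1 - 2*x) = c + 2 := by
    rw [hxdef]
    have hne : 1 - 2*(1/(c+2)) = c/(c+2) := by field_simp; ring
    rw [hne, div_div_eq_mul_div, mul_comm, mul_div_assoc, div_self hc.ne', mul_one]
  rw [interior_eq c x hc h0 h1, hx, hx2, ← add_mul]
  norm_num
  exact Real.exp_log hc2

theorem stmt15 (c : ℝ) (hc : 0 < c) (x : ℝ) (hx0 : 0 ≤ x) (hx1 : x ≤ 1 / 2) :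
    c ^ (1 - 2 * x) / (x ^ (2 * x) * (1 - 2 * x) ^ (1 - 2 * x)) ≤ c + 2 ∧
    (c ^ (1 - 2 * x) / (x ^ (2 * x) * (1 - 2 * x) ^ (1 - 2 * x)) = c + 2 ↔
      x = 1 / (c + 2)) := by
  have hc2 : (0:ℝ) < c + 2 := by linarith
  have hopt0 : (0:ℝ) < 1/(c+2) := by positivity
  have hopt1 : 1/(c+2) < 1/2 := by
    rw [div_lt_div_iff₀ hc2 (by norm_num)]; linarith
  rcases eq_or_lt_of_le hx0 with h0 | h0
  · -- x = 0
    subst h0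
    simp only [mul_zero, sub_zero, Real.rpow_zero, Real.rpow_one, one_mul, div_one]
    constructor
    · linarith
    · constructor
      · intro h; linarith
      · intro h; exact absurd h.symm hopt0.ne'
  rcases eq_or_lt_of_le hx1 with h1 | h1
  · -- x = 1/2
    subst h1
    norm_num
    constructor
    · linarith
    · constructor
      · intro h; linarith
      · intro h
        rw [h] at hopt1
        simp at hopt1
  -- interior
  by_cases hx : x = 1/(c+2)
  · subst hx
    have := at_opt c hc
    constructor
    · exact le_of_eq this
    · exact ⟨fun _ => rfl, fun _ => this⟩
  · have hlt := interior_lt c x hc h0 h1 hx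
    exact ⟨le_of_lt hlt, ⟨fun h => absurd h hlt.ne, fun h => absurd h hx⟩⟩
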